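/- Let t, x, y be real numbers and a,b,c,f,j,k,l,m,p,s complex numbers with a ≠ 0, b ≠ 0, f ≠ 0, ak−bj ≠ 0. Define i = (t − sp*)/f*, n = (|a|²y − |b|²x − m*b*(ak−bj))/(a·(ak−bj)*), d = (x − mj*)/a*, e = (y − nk*)/b*, and, assuming fs−ip ≠ 0, define g = (s*(ac*+jl*) − p*(dc*+ml*))/(fs−ip)*, q = (f*(dc*+ml*) − i*(ac*+jl*))/(fs−ip)*, h = (s*(bc*+kl*) − p*(ec*+nl*))/(fs−ip)*, r = (f*(ec*+nl*) − i*(bc*+kl*))/(fs−ip)*. Assume moreover that (gr−hq)·F(l,−c)·F(μ,−λ) ≠ 0. Then the state ρ = (1/N) Σ_{t=1}^4 v_t v_t† is entangled and satisfies ρ^Γ = ρ; in particular ρ^Γ is positive semidefinite, i.e., ρ is a PPT state. -/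

import Mathlib

open Complex ComplexConjugate
open scoped ComplexOrder

noncomputable section

/-- The "odd" checkerboard vector with entries at positions (0,0),(2,0),(1,1),(0,2),(2,2). -/
def oddVec (a b c d e : ℂ) : Fin 3 × Fin 3 → ℂ := fun u =>
  if u = (0, 0) then a else if u = (2, 0) then b else if u = (1, 1) then c
  else if u = (0, 2) then d else if u = (2, 2) then e else 0

/-- The "even" checkerboard vector with entries at positions (1,0),(0,1),(2,1),(1,2). -/
def evenVec (f g h i : ℂ) : Fin 3 × Fin 3 → ℂ := fun u =>
  if u = (1, 0) then f else if u = (0, 1) then g else if u = (2, 1) then h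
  else if u = (1, 2) then i else 0

/-- Tensor product of two vectors of ℂ³, as a function on Fin 3 × Fin 3. -/
def tp (x y : Fin 3 → ℂ) : Fin 3 × Fin 3 → ℂ := fun u => x u.1 * y u.2

/-- The binary quadratic form F(u,w) = (ae−bd)u² + (an+ej−bm−dk)uw + (jn−km)w². -/
def Fquad (a b d e j k m n : ℂ) (u w : ℂ) : ℂ :=
  (a * e - b * d) * u ^ 2 + (a * n + e * j - b * m - d * k) * u * w + (j * n - k * m) * w ^ 2

/-- λ = a(hs−ir)+b(iq−gs)+d(fr−hp)+e(gp−fq). -/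
def lamP (a b d e f g h i p q r s : ℂ) : ℂ :=
  a * (h * s - i * r) + b * (i * q - g * s) + d * (f * r - h * p) + e * (g * p - f * q)

/-- μ = f(mr−nq)+g(np−ks)+h(js−mp)+i(kq−jr). -/
def muP (f g h i j k m n p q r s : ℂ) : ℂ :=
  f * (m * r - n * q) + g * (n * p - k * s) + h * (j * s - m * p) + i * (k * q - j * r)

/-- σ = Σ_{t=1}^4 v_t v_t†, a 9×9 complex matrix. -/
def sigmaM (a b c d e f g h i j k l m n p q r s : ℂ) :
    Matrix (Fin 3 × Fin 3) (Fin 3 × Fin 3) ℂ :=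
  Matrix.of fun u w =>
    oddVec a b c d e u * conj (oddVec a b c d e w)
      + evenVec f g h i u * conj (evenVec f g h i w)
      + oddVec j k l m n u * conj (oddVec j k l m n w)
      + evenVec p q r s u * conj (evenVec p q r s w)

/-- N = Σ_{t=1}^4 ‖v_t‖². -/
def Nval (a b c d e f g h i j k l m n p q r s : ℂ) : ℝ :=
  ∑ u : Fin 3 × Fin 3,
    (‖oddVec a b c d e u‖ ^ 2 + ‖evenVec f g h i u‖ ^ 2
      + ‖oddVec j k l m n u‖ ^ 2 + ‖evenVec p q r s u‖ ^ 2)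

/-- ρ = (1/N) Σ_{t=1}^4 v_t v_t†. -/
def rhoM (a b c d e f g h i j k l m n p q r s : ℂ) :
    Matrix (Fin 3 × Fin 3) (Fin 3 × Fin 3) ℂ :=
  ((Nval a b c d e f g h i j k l m n p q r s : ℂ))⁻¹
    • sigmaM a b c d e f g h i j k l m n p q r s

/-- The partial transpose: (M^Γ)_{(i,j),(k,l)} = M_{(i,l),(k,j)}. -/
def ptrans (M : Matrix (Fin 3 × Fin 3) (Fin 3 × Fin 3) ℂ) :
    Matrix (Fin 3 × Fin 3) (Fin 3 × Fin 3) ℂ :=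
  Matrix.of fun u w => M (u.1, w.2) (w.1, u.2)

/-- A matrix on ℂ³⊗ℂ³ is separable if it is a finite sum of projections onto product vectors. -/
def SeparableMat (σ : Matrix (Fin 3 × Fin 3) (Fin 3 × Fin 3) ℂ) : Prop :=
  ∃ (n : ℕ) (x y : Fin n → Fin 3 → ℂ),
    σ = ∑ t : Fin n, Matrix.of fun u w => tp (x t) (y t) u * conj (tp (x t) (y t) w)

section
open Finset in
lemma myQuadHelper (z w : Fin 3 × Fin 3 → ℂ) :
    ∑ u : Fin 3 × Fin 3, ∑ v : Fin 3 × Fin 3, conj (w u) * (z u * conj (z v)) * w v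
      = (Complex.normSq (∑ u : Fin 3 × Fin 3, conj (z u) * w u) : ℂ) := by
  have h1 : ∀ u : Fin 3 × Fin 3, ∑ v : Fin 3 × Fin 3, conj (w u) * (z u * conj (z v)) * w v
      = (conj (w u) * z u) * ∑ v : Fin 3 × Fin 3, conj (z v) * w v := by
    intro u
    rw [Finset.mul_sum]
    exact Finset.sum_congr rfl fun v _ => by ring
  simp_rw [h1]
  rw [← Finset.sum_mul]
  have h2 : (∑ u : Fin 3 × Fin 3, conj (w u) * z u)
      = conj (∑ u : Fin 3 × Fin 3, conj (z u) * w u) := by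
    rw [map_sum]
    exact Finset.sum_congr rfl fun u _ => by simp [mul_comm]
  rw [h2, mul_comm, Complex.mul_conj]
end

section
lemma myExtract {nn : ℕ} (v1 v2 v3 v4 : Fin 3 × Fin 3 → ℂ) (N : ℝ) (hN : 0 < N)
    (z : Fin nn → Fin 3 × Fin 3 → ℂ)
    (hsep : ((N : ℂ))⁻¹ • (Matrix.of fun u w : Fin 3 × Fin 3 =>
        v1 u * conj (v1 w) + v2 u * conj (v2 w) + v3 u * conj (v3 w) + v4 u * conj (v4 w))
      = ∑ t : Fin nn, Matrix.of fun u w : Fin 3 × Fin 3 => z t u * conj (z t w))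
    (w : Fin 3 × Fin 3 → ℂ)
    (o1 : ∑ u : Fin 3 × Fin 3, conj (v1 u) * w u = 0)
    (o2 : ∑ u : Fin 3 × Fin 3, conj (v2 u) * w u = 0)
    (o3 : ∑ u : Fin 3 × Fin 3, conj (v3 u) * w u = 0)
    (o4 : ∑ u : Fin 3 × Fin 3, conj (v4 u) * w u = 0) :
    ∀ t, ∑ u : Fin 3 × Fin 3, conj (z t u) * w u = 0 := by
  have key : ∑ u : Fin 3 × Fin 3, ∑ v : Fin 3 × Fin 3,
      conj (w u) * ((∑ t : Fin nn, Matrix.of fun u w : Fin 3 × Fin 3 => z t u * conj (z t w)) u v) * w v = 0 := by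
    rw [← hsep]
    have expand : ∀ u v : Fin 3 × Fin 3,
        conj (w u) * ((((N : ℂ))⁻¹ • (Matrix.of fun u w : Fin 3 × Fin 3 =>
          v1 u * conj (v1 w) + v2 u * conj (v2 w) + v3 u * conj (v3 w) + v4 u * conj (v4 w))) u v) * w v
        = ((N : ℂ))⁻¹ * (conj (w u) * (v1 u * conj (v1 v)) * w v
            + conj (w u) * (v2 u * conj (v2 v)) * w v
            + conj (w u) * (v3 u * conj (v3 v)) * w v
            + conj (w u) * (v4 u * conj (v4 v)) * w v) := by
      intro u v
      simp only [Matrix.smul_apply, Matrix.of_apply, smul_eq_mul]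
      ring
    simp_rw [expand, ← Finset.mul_sum, Finset.sum_add_distrib]
    rw [myQuadHelper v1 w, myQuadHelper v2 w, myQuadHelper v3 w, myQuadHelper v4 w,
      o1, o2, o3, o4]
    simp
  -- now RHS as sum of normSq
  have e1 : ∀ u v : Fin 3 × Fin 3,
      conj (w u) * ((∑ t : Fin nn, Matrix.of fun u w : Fin 3 × Fin 3 => z t u * conj (z t w)) u v) * w v
      = ∑ t : Fin nn, conj (w u) * (z t u * conj (z t v)) * w v := by
    intro u v
    rw [Matrix.sum_apply, Finset.mul_sum, Finset.sum_mul]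
    exact Finset.sum_congr rfl fun t _ => by simp [Matrix.of_apply]
  have key2 : ∑ t : Fin nn, (Complex.normSq (∑ u : Fin 3 × Fin 3, conj (z t u) * w u) : ℂ) = 0 := by
    calc ∑ t : Fin nn, (Complex.normSq (∑ u : Fin 3 × Fin 3, conj (z t u) * w u) : ℂ)
        = ∑ t : Fin nn, ∑ u : Fin 3 × Fin 3, ∑ v : Fin 3 × Fin 3,
            conj (w u) * (z t u * conj (z t v)) * w v :=
          Finset.sum_congr rfl fun t _ => (myQuadHelper (z t) w).symm
      _ = ∑ u : Fin 3 × Fin 3, ∑ t : Fin nn, ∑ v : Fin 3 × Fin 3,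
            conj (w u) * (z t u * conj (z t v)) * w v := Finset.sum_comm
      _ = ∑ u : Fin 3 × Fin 3, ∑ v : Fin 3 × Fin 3, ∑ t : Fin nn,
            conj (w u) * (z t u * conj (z t v)) * w v :=
          Finset.sum_congr rfl fun u _ => Finset.sum_comm
      _ = 0 := by simp_rw [← e1]; exact key
  have key3 : ∑ t : Fin nn, Complex.normSq (∑ u : Fin 3 × Fin 3, conj (z t u) * w u) = 0 := by
    have := key2
    exact_mod_cast this
  intro t
  have hterm := (Finset.sum_eq_zero_iff_of_nonneg (fun i _ => Complex.normSq_nonneg _)).mp key3 t (Finset.mem_univ t)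
  exact Complex.normSq_eq_zero.mp hterm
end

section
lemma myNonzero {nn : ℕ} (v1 v2 v3 v4 : Fin 3 × Fin 3 → ℂ) (N : ℝ) (hN : 0 < N)
    (z : Fin nn → Fin 3 × Fin 3 → ℂ)
    (hsep : ((N : ℂ))⁻¹ • (Matrix.of fun u w : Fin 3 × Fin 3 =>
        v1 u * conj (v1 w) + v2 u * conj (v2 w) + v3 u * conj (v3 w) + v4 u * conj (v4 w))
      = ∑ t : Fin nn, Matrix.of fun u w : Fin 3 × Fin 3 => z t u * conj (z t w))
    (u0 : Fin 3 × Fin 3) (hv : v1 u0 ≠ 0) : ∃ t, z t u0 ≠ 0 := by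
  by_contra hall
  push_neg at hall
  have hentry := congrFun (congrFun hsep u0) u0
  simp only [Matrix.smul_apply, Matrix.of_apply, Matrix.sum_apply, smul_eq_mul] at hentry
  simp only [hall, zero_mul, Finset.sum_const, smul_zero] at hentry
  have hNe : ((N : ℂ))⁻¹ ≠ 0 := by
    simp only [ne_eq, inv_eq_zero, Complex.ofReal_eq_zero]
    exact ne_of_gt hN
  have hzero := (mul_eq_zero.mp hentry).resolve_left hNe
  rw [Complex.mul_conj, Complex.mul_conj, Complex.mul_conj, Complex.mul_conj] at hzero
  have : Complex.normSq (v1 u0) = 0 := by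
    have h2 : ((Complex.normSq (v1 u0) + Complex.normSq (v2 u0) + Complex.normSq (v3 u0)
        + Complex.normSq (v4 u0) : ℝ) : ℂ) = 0 := by push_cast; exact hzero
    have h3 := Complex.ofReal_eq_zero.mp h2
    nlinarith [Complex.normSq_nonneg (v1 u0), Complex.normSq_nonneg (v2 u0),
      Complex.normSq_nonneg (v3 u0), Complex.normSq_nonneg (v4 u0)]
  exact hv (Complex.normSq_eq_zero.mp this)
end

section
lemma myPSD (v1 v2 v3 v4 : Fin 3 × Fin 3 → ℂ) (N : ℝ) (hN : 0 ≤ N) :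
    (((N : ℂ))⁻¹ • (Matrix.of fun u w : Fin 3 × Fin 3 =>
        v1 u * conj (v1 w) + v2 u * conj (v2 w) + v3 u * conj (v3 w)
          + v4 u * conj (v4 w))).PosSemidef := by
  rw [Matrix.posSemidef_iff_dotProduct_mulVec]
  constructor
  · show _ = _
    ext u w
    simp only [Matrix.conjTranspose_apply, Matrix.smul_apply, Matrix.of_apply, smul_eq_mul,
      star_mul', star_add, Complex.star_def, map_inv₀, Complex.conj_ofReal, map_add, map_mul,
      Complex.conj_conj]
    ring
  · intro v
    have hform : dotProduct (star v) (Matrix.mulVec (((N : ℂ))⁻¹ • (Matrix.of fun u w : Fin 3 × Fin 3 =>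
        v1 u * conj (v1 w) + v2 u * conj (v2 w) + v3 u * conj (v3 w)
          + v4 u * conj (v4 w))) v)
        = ((N : ℂ))⁻¹ * ((Complex.normSq (∑ u : Fin 3 × Fin 3, conj (v1 u) * v u) : ℂ)
          + (Complex.normSq (∑ u : Fin 3 × Fin 3, conj (v2 u) * v u) : ℂ)
          + (Complex.normSq (∑ u : Fin 3 × Fin 3, conj (v3 u) * v u) : ℂ)
          + (Complex.normSq (∑ u : Fin 3 × Fin 3, conj (v4 u) * v u) : ℂ)) := by
      rw [← myQuadHelper v1 v, ← myQuadHelper v2 v, ← myQuadHelper v3 v, ← myQuadHelper v4 v]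
      simp only [dotProduct, Matrix.mulVec, Matrix.smul_apply, Matrix.of_apply,
        smul_eq_mul, Pi.star_apply, Complex.star_def]
      have step1 : (∑ x : Fin 3 × Fin 3, conj (v x) * ∑ x1 : Fin 3 × Fin 3,
            ((N : ℂ))⁻¹ * (v1 x * conj (v1 x1) + v2 x * conj (v2 x1) + v3 x * conj (v3 x1)
              + v4 x * conj (v4 x1)) * v x1)
          = ∑ x : Fin 3 × Fin 3, ((N : ℂ))⁻¹ * ∑ x1 : Fin 3 × Fin 3,
            (conj (v x) * (v1 x * conj (v1 x1)) * v x1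
              + conj (v x) * (v2 x * conj (v2 x1)) * v x1
              + conj (v x) * (v3 x * conj (v3 x1)) * v x1
              + conj (v x) * (v4 x * conj (v4 x1)) * v x1) := by
        refine Finset.sum_congr rfl fun x _ => ?_
        rw [Finset.mul_sum, Finset.mul_sum]
        exact Finset.sum_congr rfl fun x1 _ => by ring
      rw [step1, ← Finset.mul_sum]
      congr 1
      simp only [Finset.sum_add_distrib]
    rw [hform]
    have hc : ((N : ℂ))⁻¹ = ((N⁻¹ : ℝ) : ℂ) := by push_cast; ring
    rw [hc, ← Complex.ofReal_add, ← Complex.ofReal_add, ← Complex.ofReal_add,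
      ← Complex.ofReal_mul, Complex.zero_le_real]
    have := Complex.normSq_nonneg (∑ u : Fin 3 × Fin 3, conj (v1 u) * v u)
    have := Complex.normSq_nonneg (∑ u : Fin 3 × Fin 3, conj (v2 u) * v u)
    have := Complex.normSq_nonneg (∑ u : Fin 3 × Fin 3, conj (v3 u) * v u)
    have := Complex.normSq_nonneg (∑ u : Fin 3 × Fin 3, conj (v4 u) * v u)
    have hNi : 0 ≤ N⁻¹ := inv_nonneg.mpr hN
    positivity
end

set_option maxHeartbeats 4000000 in
theorem stmt4 (t x y : ℝ) (a b c f j k l m p s : ℂ)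
    (ha : a ≠ 0) (hb : b ≠ 0) (hf : f ≠ 0) (hak : a * k - b * j ≠ 0)
    (i n d e g q h r : ℂ)
    (hi : i = ((t : ℂ) - s * conj p) / conj f)
    (hn : n = ((Complex.normSq a : ℂ) * (y : ℂ) - (Complex.normSq b : ℂ) * (x : ℂ)
      - conj m * conj b * (a * k - b * j)) / (a * conj (a * k - b * j)))
    (hd : d = ((x : ℂ) - m * conj j) / conj a)
    (he : e = ((y : ℂ) - n * conj k) / conj b)
    (hfs : f * s - i * p ≠ 0)
    (hg : g = (conj s * (a * conj c + j * conj l) - conj p * (d * conj c + m * conj l))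
      / conj (f * s - i * p))
    (hq : q = (conj f * (d * conj c + m * conj l) - conj i * (a * conj c + j * conj l))
      / conj (f * s - i * p))
    (hh : h = (conj s * (b * conj c + k * conj l) - conj p * (e * conj c + n * conj l))
      / conj (f * s - i * p))
    (hr : r = (conj f * (e * conj c + n * conj l) - conj i * (b * conj c + k * conj l))
      / conj (f * s - i * p))
    (hcond : (g * r - h * q) * Fquad a b d e j k m n l (-c) *
      Fquad a b d e j k m n (muP f g h i j k m n p q r s)
        (-(lamP a b d e f g h i p q r s)) ≠ 0) :
    ¬ SeparableMat (rhoM a b c d e f g h i j k l m n p q r s) ∧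
    ptrans (rhoM a b c d e f g h i j k l m n p q r s)
      = rhoM a b c d e f g h i j k l m n p q r s ∧
    (ptrans (rhoM a b c d e f g h i j k l m n p q r s)).PosSemidef := by
  -- basic nonvanishing facts
  have hGR : g * r - h * q ≠ 0 := left_ne_zero_of_mul (left_ne_zero_of_mul hcond)
  have hFlc : Fquad a b d e j k m n l (-c) ≠ 0 :=
    right_ne_zero_of_mul (left_ne_zero_of_mul hcond)
  have hFml : Fquad a b d e j k m n (muP f g h i j k m n p q r s)
      (-(lamP a b d e f g h i p q r s)) ≠ 0 := right_ne_zero_of_mul hcond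
  have hconj_ne : ∀ z : ℂ, z ≠ 0 → conj z ≠ 0 := by
    intro z hz hc
    apply hz
    have := congrArg (starRingEnd ℂ) hc
    simpa using this
  have hcf : conj f ≠ 0 := hconj_ne _ hf
  have hca : conj a ≠ 0 := hconj_ne _ ha
  have hcb : conj b ≠ 0 := hconj_ne _ hb
  have hcak : conj (a * k - b * j) ≠ 0 := hconj_ne _ hak
  have hcfs : conj (f * s - i * p) ≠ 0 := hconj_ne _ hfs
  have hconjfs : conj (f * s - i * p) = conj f * conj s - conj i * conj p := by
    simp [map_sub, map_mul]
  have hconjak : conj (a * k - b * j) = conj a * conj k - conj b * conj j := by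
    simp [map_sub, map_mul]
  -- multiplied-out forms of the defining relations
  have Hg : g * (conj f * conj s - conj i * conj p)
      = conj s * (a * conj c + j * conj l) - conj p * (d * conj c + m * conj l) := by
    rw [hg, ← hconjfs]; exact div_mul_cancel₀ _ hcfs
  have Hq : q * (conj f * conj s - conj i * conj p)
      = conj f * (d * conj c + m * conj l) - conj i * (a * conj c + j * conj l) := by
    rw [hq, ← hconjfs]; exact div_mul_cancel₀ _ hcfs
  have Hh : h * (conj f * conj s - conj i * conj p)
      = conj s * (b * conj c + k * conj l) - conj p * (e * conj c + n * conj l) := by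
    rw [hh, ← hconjfs]; exact div_mul_cancel₀ _ hcfs
  have Hr : r * (conj f * conj s - conj i * conj p)
      = conj f * (e * conj c + n * conj l) - conj i * (b * conj c + k * conj l) := by
    rw [hr, ← hconjfs]; exact div_mul_cancel₀ _ hcfs
  have Hi : i * conj f = (t : ℂ) - s * conj p := by
    rw [hi]; exact div_mul_cancel₀ _ hcf
  have Hd : d * conj a = (x : ℂ) - m * conj j := by
    rw [hd]; exact div_mul_cancel₀ _ hca
  have He : e * conj b = (y : ℂ) - n * conj k := by
    rw [he]; exact div_mul_cancel₀ _ hcb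
  have Hn : n * (a * conj (a * k - b * j)) = (Complex.normSq a : ℂ) * (y : ℂ)
      - (Complex.normSq b : ℂ) * (x : ℂ) - conj m * conj b * (a * k - b * j) := by
    rw [hn]; exact div_mul_cancel₀ _ (mul_ne_zero ha hcak)
  have Hn2 : n * (a * (conj a * conj k - conj b * conj j)) = a * conj a * (y : ℂ)
      - b * conj b * (x : ℂ) - conj m * conj b * (a * k - b * j) := by
    rw [← hconjak, Hn, ← Complex.mul_conj, ← Complex.mul_conj]
  -- conjugated versions
  have Hi' : conj i * f = (t : ℂ) - conj s * p := by
    have h' := congrArg (starRingEnd ℂ) Hi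
    simp only [map_mul, map_sub, Complex.conj_conj, Complex.conj_ofReal] at h'
    linear_combination h'
  have Hd' : conj d * a = (x : ℂ) - conj m * j := by
    have h' := congrArg (starRingEnd ℂ) Hd
    simp only [map_mul, map_sub, Complex.conj_conj, Complex.conj_ofReal] at h'
    linear_combination h'
  have He' : conj e * b = (y : ℂ) - conj n * k := by
    have h' := congrArg (starRingEnd ℂ) He
    simp only [map_mul, map_sub, Complex.conj_conj, Complex.conj_ofReal] at h'
    linear_combination h'
  have Hn2' : conj n * (conj a * (a * k - b * j)) = a * conj a * (y : ℂ)
      - b * conj b * (x : ℂ) - m * b * (conj a * conj k - conj b * conj j) := by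
    have h' := congrArg (starRingEnd ℂ) Hn2
    simp only [map_mul, map_sub, Complex.conj_conj, Complex.conj_ofReal] at h'
    linear_combination h'
  have Hg' : conj g * (f * s - i * p)
      = s * (conj a * c + conj j * l) - p * (conj d * c + conj m * l) := by
    have h' := congrArg (starRingEnd ℂ) Hg
    simp only [map_mul, map_sub, map_add, Complex.conj_conj] at h'
    linear_combination h'
  have Hq' : conj q * (f * s - i * p)
      = f * (conj d * c + conj m * l) - i * (conj a * c + conj j * l) := by
    have h' := congrArg (starRingEnd ℂ) Hq
    simp only [map_mul, map_sub, map_add, Complex.conj_conj] at h'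
    linear_combination h'
  have Hh' : conj h * (f * s - i * p)
      = s * (conj b * c + conj k * l) - p * (conj e * c + conj n * l) := by
    have h' := congrArg (starRingEnd ℂ) Hh
    simp only [map_mul, map_sub, map_add, Complex.conj_conj] at h'
    linear_combination h'
  have Hr' : conj r * (f * s - i * p)
      = f * (conj e * c + conj n * l) - i * (conj b * c + conj k * l) := by
    have h' := congrArg (starRingEnd ℂ) Hr
    simp only [map_mul, map_sub, map_add, Complex.conj_conj] at h'
    linear_combination h'
  have hCne : conj f * conj s - conj i * conj p ≠ 0 := by rw [← hconjfs]; exact hcfs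
  -- the scalar identities needed for the partial transpose invariance
  have I1 : a * conj c + j * conj l = g * conj f + q * conj p := by
    apply mul_right_cancel₀ hCne
    linear_combination -conj f * Hg - conj p * Hq
  have I2 : b * conj c + k * conj l = h * conj f + r * conj p := by
    apply mul_right_cancel₀ hCne
    linear_combination -conj f * Hh - conj p * Hr
  have I3 : d * conj c + m * conj l = g * conj i + q * conj s := by
    apply mul_right_cancel₀ hCne
    linear_combination -conj i * Hg - conj s * Hq
  have I4 : e * conj c + n * conj l = h * conj i + r * conj s := by
    apply mul_right_cancel₀ hCne
    linear_combination -conj i * Hh - conj s * Hr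
  have I1' : c * conj a + l * conj j = f * conj g + p * conj q := by
    apply mul_right_cancel₀ hfs
    linear_combination -f * Hg' - p * Hq'
  have I2' : c * conj b + l * conj k = f * conj h + p * conj r := by
    apply mul_right_cancel₀ hfs
    linear_combination -f * Hh' - p * Hr'
  have I3' : c * conj d + l * conj m = i * conj g + s * conj q := by
    apply mul_right_cancel₀ hfs
    linear_combination -i * Hg' - s * Hq'
  have I4' : c * conj e + l * conj n = i * conj h + s * conj r := by
    apply mul_right_cancel₀ hfs
    linear_combination -i * Hh' - s * Hr'
  have I5 : a * conj d + j * conj m = d * conj a + m * conj j := by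
    linear_combination Hd' - Hd
  have I7 : b * conj e + k * conj n = e * conj b + n * conj k := by
    linear_combination He' - He
  have I8 : f * conj i + p * conj s = i * conj f + s * conj p := by
    linear_combination Hi' - Hi
  have I6 : a * conj e + j * conj n = d * conj b + m * conj k := by
    apply mul_right_cancel₀ (mul_ne_zero hca hb)
    linear_combination (a * conj a) * He' - Hn2' - b * conj b * Hd
  have I6' : e * conj a + n * conj j = b * conj d + k * conj m := by
    have h' := congrArg (starRingEnd ℂ) I6
    simp only [map_mul, map_add, Complex.conj_conj] at h'
    linear_combination h'
  -- partial transpose invariance of sigma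
  have hPT : ptrans (sigmaM a b c d e f g h i j k l m n p q r s)
      = sigmaM a b c d e f g h i j k l m n p q r s := by
    ext ⟨u1, u2⟩ ⟨w1, w2⟩
    fin_cases u1 <;> fin_cases u2 <;> fin_cases w1 <;> fin_cases w2 <;>
      simp [ptrans, sigmaM, oddVec, evenVec, Prod.ext_iff] <;>
      first
        | exact I1 | exact I1.symm | exact I1' | exact I1'.symm
        | exact I2 | exact I2.symm | exact I2' | exact I2'.symm
        | exact I3 | exact I3.symm | exact I3' | exact I3'.symm
        | exact I4 | exact I4.symm | exact I4' | exact I4'.symm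
        | exact I5 | exact I5.symm | exact I6 | exact I6.symm
        | exact I6' | exact I6'.symm | exact I7 | exact I7.symm
        | exact I8 | exact I8.symm
  have hPTrho : ptrans (rhoM a b c d e f g h i j k l m n p q r s)
      = rhoM a b c d e f g h i j k l m n p q r s := by
    show ptrans (((Nval a b c d e f g h i j k l m n p q r s : ℂ))⁻¹
        • sigmaM a b c d e f g h i j k l m n p q r s)
      = ((Nval a b c d e f g h i j k l m n p q r s : ℂ))⁻¹
        • sigmaM a b c d e f g h i j k l m n p q r s
    ext u w
    have hentry := congrFun (congrFun hPT u) w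
    simp only [ptrans, Matrix.of_apply] at hentry ⊢
    simp only [Matrix.smul_apply, smul_eq_mul]
    rw [hentry]
  have hNpos : 0 < Nval a b c d e f g h i j k l m n p q r s := by
    have hterm : ∀ u : Fin 3 × Fin 3, 0 ≤ ‖oddVec a b c d e u‖^2 + ‖evenVec f g h i u‖^2
        + ‖oddVec j k l m n u‖^2 + ‖evenVec p q r s u‖^2 := fun u => by positivity
    have h0 : 0 < ‖oddVec a b c d e ((0 : Fin 3), (0 : Fin 3))‖^2
        + ‖evenVec f g h i ((0 : Fin 3), (0 : Fin 3))‖^2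
        + ‖oddVec j k l m n ((0 : Fin 3), (0 : Fin 3))‖^2
        + ‖evenVec p q r s ((0 : Fin 3), (0 : Fin 3))‖^2 := by
      have e1 : oddVec a b c d e ((0 : Fin 3), (0 : Fin 3)) = a := by simp [oddVec]
      rw [e1]
      have h1 : 0 < ‖a‖^2 := by
        have := norm_pos_iff.mpr ha
        positivity
      have h2 : 0 ≤ ‖evenVec f g h i ((0 : Fin 3), (0 : Fin 3))‖^2 := by positivity
      have h3 : 0 ≤ ‖oddVec j k l m n ((0 : Fin 3), (0 : Fin 3))‖^2 := by positivity
      have h4 : 0 ≤ ‖evenVec p q r s ((0 : Fin 3), (0 : Fin 3))‖^2 := by positivity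
      linarith
    exact Finset.sum_pos' (fun u _ => hterm u) ⟨((0 : Fin 3), (0 : Fin 3)), Finset.mem_univ _, h0⟩
  refine ⟨?_, hPTrho, ?_⟩
  swap
  · rw [hPTrho]
    exact myPSD (oddVec a b c d e) (evenVec f g h i)
      (oddVec j k l m n) (evenVec p q r s) _ hNpos.le
  rintro ⟨nn, X, Y, hsepEq⟩
  have hext := myExtract (oddVec a b c d e) (evenVec f g h i) (oddVec j k l m n)
    (evenVec p q r s) _ hNpos (fun t => tp (X t) (Y t)) hsepEq
  obtain ⟨t0, ht0⟩ := myNonzero (oddVec a b c d e) (evenVec f g h i) (oddVec j k l m n)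
    (evenVec p q r s) _ hNpos (fun t => tp (X t) (Y t)) hsepEq ((0 : Fin 3), (0 : Fin 3))
    (by simpa [oddVec] using ha)
  set x0 := X t0 0 with hx0def
  set x1 := X t0 1 with hx1def
  set x2 := X t0 2 with hx2def
  set y0 := Y t0 0 with hy0def
  set y1 := Y t0 1 with hy1def
  set y2 := Y t0 2 with hy2def
  have hz00 : x0 * y0 ≠ 0 := ht0
  -- the five linear relations coming from orthogonality
  have Rel11 : x0*y0*(b*l-k*c) + x2*y0*(c*j-a*l) + x1*y1*(a*k-b*j) = 0 := by
    have hw := hext (fun u => if u = ((0 : Fin 3), (0 : Fin 3)) then conj (b*l-k*c)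
        else if u = ((2 : Fin 3), (0 : Fin 3)) then conj (c*j-a*l)
        else if u = ((1 : Fin 3), (1 : Fin 3)) then conj (a*k-b*j) else 0)
      (by simp [oddVec, Fintype.sum_prod_type, Fin.sum_univ_three, map_sub, map_mul]; ring)
      (by simp [evenVec, Fintype.sum_prod_type, Fin.sum_univ_three, map_sub, map_mul])
      (by simp [oddVec, Fintype.sum_prod_type, Fin.sum_univ_three, map_sub, map_mul]; ring)
      (by simp [evenVec, Fintype.sum_prod_type, Fin.sum_univ_three, map_sub, map_mul]) t0
    simp only [tp, Fintype.sum_prod_type, Fin.sum_univ_three] at hw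
    simp only [Prod.mk.injEq, ite_true, ite_false, and_self, and_true, true_and,
      one_ne_zero, zero_ne_one, Fin.reduceEq, if_true, if_false, reduceIte,
      mul_zero, add_zero, zero_add, map_mul, map_sub] at hw
    have hw2 := congrArg (starRingEnd ℂ) hw
    simp only [map_add, map_mul, map_sub, map_zero, Complex.conj_conj] at hw2
    linear_combination hw2
  have Rel02 : x0*y0*(b*m-k*d) + x2*y0*(d*j-a*m) + x0*y2*(a*k-b*j) = 0 := by
    have hw := hext (fun u => if u = ((0 : Fin 3), (0 : Fin 3)) then conj (b*m-k*d)
        else if u = ((2 : Fin 3), (0 : Fin 3)) then conj (d*j-a*m)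
        else if u = ((0 : Fin 3), (2 : Fin 3)) then conj (a*k-b*j) else 0)
      (by simp [oddVec, Fintype.sum_prod_type, Fin.sum_univ_three, map_sub, map_mul]; ring)
      (by simp [evenVec, Fintype.sum_prod_type, Fin.sum_univ_three, map_sub, map_mul])
      (by simp [oddVec, Fintype.sum_prod_type, Fin.sum_univ_three, map_sub, map_mul]; ring)
      (by simp [evenVec, Fintype.sum_prod_type, Fin.sum_univ_three, map_sub, map_mul]) t0
    simp only [tp, Fintype.sum_prod_type, Fin.sum_univ_three] at hw
    simp only [Prod.mk.injEq, ite_true, ite_false, and_self, and_true, true_and,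
      one_ne_zero, zero_ne_one, Fin.reduceEq, if_true, if_false, reduceIte,
      mul_zero, add_zero, zero_add, map_mul, map_sub] at hw
    have hw2 := congrArg (starRingEnd ℂ) hw
    simp only [map_add, map_mul, map_sub, map_zero, Complex.conj_conj] at hw2
    linear_combination hw2
  have Rel22 : x0*y0*(b*n-k*e) + x2*y0*(e*j-a*n) + x2*y2*(a*k-b*j) = 0 := by
    have hw := hext (fun u => if u = ((0 : Fin 3), (0 : Fin 3)) then conj (b*n-k*e)
        else if u = ((2 : Fin 3), (0 : Fin 3)) then conj (e*j-a*n)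
        else if u = ((2 : Fin 3), (2 : Fin 3)) then conj (a*k-b*j) else 0)
      (by simp [oddVec, Fintype.sum_prod_type, Fin.sum_univ_three, map_sub, map_mul]; ring)
      (by simp [evenVec, Fintype.sum_prod_type, Fin.sum_univ_three, map_sub, map_mul])
      (by simp [oddVec, Fintype.sum_prod_type, Fin.sum_univ_three, map_sub, map_mul]; ring)
      (by simp [evenVec, Fintype.sum_prod_type, Fin.sum_univ_three, map_sub, map_mul]) t0
    simp only [tp, Fintype.sum_prod_type, Fin.sum_univ_three] at hw
    simp only [Prod.mk.injEq, ite_true, ite_false, and_self, and_true, true_and,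
      one_ne_zero, zero_ne_one, Fin.reduceEq, if_true, if_false, reduceIte,
      mul_zero, add_zero, zero_add, map_mul, map_sub] at hw
    have hw2 := congrArg (starRingEnd ℂ) hw
    simp only [map_add, map_mul, map_sub, map_zero, Complex.conj_conj] at hw2
    linear_combination hw2
  have Rel10 : x0*y1*(h*p-r*f) + x2*y1*(f*q-g*p) + x1*y0*(g*r-h*q) = 0 := by
    have hw := hext (fun u => if u = ((0 : Fin 3), (1 : Fin 3)) then conj (h*p-r*f)
        else if u = ((2 : Fin 3), (1 : Fin 3)) then conj (f*q-g*p)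
        else if u = ((1 : Fin 3), (0 : Fin 3)) then conj (g*r-h*q) else 0)
      (by simp [oddVec, Fintype.sum_prod_type, Fin.sum_univ_three, map_sub, map_mul])
      (by simp [evenVec, Fintype.sum_prod_type, Fin.sum_univ_three, map_sub, map_mul]; ring)
      (by simp [oddVec, Fintype.sum_prod_type, Fin.sum_univ_three, map_sub, map_mul])
      (by simp [evenVec, Fintype.sum_prod_type, Fin.sum_univ_three, map_sub, map_mul]; ring) t0
    simp only [tp, Fintype.sum_prod_type, Fin.sum_univ_three] at hw
    simp only [Prod.mk.injEq, ite_true, ite_false, and_self, and_true, true_and,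
      one_ne_zero, zero_ne_one, Fin.reduceEq, if_true, if_false, reduceIte,
      mul_zero, add_zero, zero_add, map_mul, map_sub] at hw
    have hw2 := congrArg (starRingEnd ℂ) hw
    simp only [map_add, map_mul, map_sub, map_zero, Complex.conj_conj] at hw2
    linear_combination hw2
  have Rel12 : x0*y1*(h*s-r*i) + x2*y1*(i*q-g*s) + x1*y2*(g*r-h*q) = 0 := by
    have hw := hext (fun u => if u = ((0 : Fin 3), (1 : Fin 3)) then conj (h*s-r*i)
        else if u = ((2 : Fin 3), (1 : Fin 3)) then conj (i*q-g*s)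
        else if u = ((1 : Fin 3), (2 : Fin 3)) then conj (g*r-h*q) else 0)
      (by simp [oddVec, Fintype.sum_prod_type, Fin.sum_univ_three, map_sub, map_mul])
      (by simp [evenVec, Fintype.sum_prod_type, Fin.sum_univ_three, map_sub, map_mul]; ring)
      (by simp [oddVec, Fintype.sum_prod_type, Fin.sum_univ_three, map_sub, map_mul])
      (by simp [evenVec, Fintype.sum_prod_type, Fin.sum_univ_three, map_sub, map_mul]; ring) t0
    simp only [tp, Fintype.sum_prod_type, Fin.sum_univ_three] at hw
    simp only [Prod.mk.injEq, ite_true, ite_false, and_self, and_true, true_and,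
      one_ne_zero, zero_ne_one, Fin.reduceEq, if_true, if_false, reduceIte,
      mul_zero, add_zero, zero_add, map_mul, map_sub] at hw
    have hw2 := congrArg (starRingEnd ℂ) hw
    simp only [map_add, map_mul, map_sub, map_zero, Complex.conj_conj] at hw2
    linear_combination hw2
  -- coefficients of the decomposition in the span of the four vectors
  set al := (k*(x0*y0) - j*(x2*y0))/(a*k-b*j) with haldef
  set ga := (a*(x2*y0) - b*(x0*y0))/(a*k-b*j) with hgadef
  set be := (r*(x0*y1) - q*(x2*y1))/(g*r-h*q) with hbedef
  set de := (g*(x2*y1) - h*(x0*y1))/(g*r-h*q) with hdedef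
  have h1 : x0*y0 = al*a + ga*j := by
    rw [haldef, hgadef, div_mul_eq_mul_div, div_mul_eq_mul_div, ← add_div, eq_div_iff hak]; ring
  have h2 : x2*y0 = al*b + ga*k := by
    rw [haldef, hgadef, div_mul_eq_mul_div, div_mul_eq_mul_div, ← add_div, eq_div_iff hak]; ring
  have h7 : x0*y1 = be*g + de*q := by
    rw [hbedef, hdedef, div_mul_eq_mul_div, div_mul_eq_mul_div, ← add_div, eq_div_iff hGR]; ring
  have h8 : x2*y1 = be*h + de*r := by
    rw [hbedef, hdedef, div_mul_eq_mul_div, div_mul_eq_mul_div, ← add_div, eq_div_iff hGR]; ring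
  have h3 : x1*y1 = al*c + ga*l := by
    rw [haldef, hgadef, div_mul_eq_mul_div, div_mul_eq_mul_div, ← add_div, eq_div_iff hak]; linear_combination Rel11
  have h4 : x0*y2 = al*d + ga*m := by
    rw [haldef, hgadef, div_mul_eq_mul_div, div_mul_eq_mul_div, ← add_div, eq_div_iff hak]; linear_combination Rel02
  have h5 : x2*y2 = al*e + ga*n := by
    rw [haldef, hgadef, div_mul_eq_mul_div, div_mul_eq_mul_div, ← add_div, eq_div_iff hak]; linear_combination Rel22
  have h6 : x1*y0 = be*f + de*p := by
    rw [hbedef, hdedef, div_mul_eq_mul_div, div_mul_eq_mul_div, ← add_div, eq_div_iff hGR]; linear_combination Rel10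
  have h9 : x1*y2 = be*i + de*s := by
    rw [hbedef, hdedef, div_mul_eq_mul_div, div_mul_eq_mul_div, ← add_div, eq_div_iff hGR]; linear_combination Rel12
  -- the quadratic relation
  have E5 : (al*a+ga*j)*(al*e+ga*n) = (al*b+ga*k)*(al*d+ga*m) := by
    rw [← h1, ← h5, ← h2, ← h4]; ring
  have FA : (a*e-b*d)*al^2 + (a*n+e*j-b*m-d*k)*al*ga + (j*n-k*m)*ga^2 = 0 := by
    linear_combination E5
  by_cases hxy1 : x1 * y1 = 0
  · -- central coefficient vanishes: contradiction with F(l,-c) ≠ 0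
    have hcl : al*c + ga*l = 0 := by rw [← h3]; exact hxy1
    have hal : al = 0 := by
      have hq2 : Fquad a b d e j k m n l (-c) * al^2 = 0 := by
        simp only [Fquad]
        linear_combination l^2 * FA
          + (-(a*n+e*j-b*m-d*k)*al*l - (j*n-k*m)*(ga*l-al*c)) * hcl
      rcases mul_eq_zero.mp hq2 with h' | h'
      · exact absurd h' hFlc
      · exact pow_eq_zero_iff two_ne_zero |>.mp h'
    have hga : ga = 0 := by
      have hq2 : Fquad a b d e j k m n l (-c) * ga^2 = 0 := by
        simp only [Fquad]
        linear_combination c^2 * FA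
          + ((a*e-b*d)*(ga*l-al*c) - (a*n+e*j-b*m-d*k)*c*ga) * hcl
      rcases mul_eq_zero.mp hq2 with h' | h'
      · exact absurd h' hFlc
      · exact pow_eq_zero_iff two_ne_zero |>.mp h'
    apply hz00
    rw [h1, hal, hga]; ring
  · -- central coefficient nonzero: contradiction with F(mu,-lam) ≠ 0
    have hu : al*c + ga*l ≠ 0 := by rw [← h3]; exact hxy1
    have E1 : (be*g+de*q)*(be*f+de*p) = (al*a+ga*j)*(al*c+ga*l) := by
      rw [← h7, ← h6, ← h1, ← h3]; ring
    have E2 : (be*g+de*q)*(be*i+de*s) = (al*d+ga*m)*(al*c+ga*l) := by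
      rw [← h7, ← h9, ← h4, ← h3]; ring
    have E3 : (be*h+de*r)*(be*f+de*p) = (al*b+ga*k)*(al*c+ga*l) := by
      rw [← h8, ← h6, ← h2, ← h3]; ring
    have E4 : (be*h+de*r)*(be*i+de*s) = (al*e+ga*n)*(al*c+ga*l) := by
      rw [← h8, ← h9, ← h5, ← h3]; ring
    have key : (al*c+ga*l) * (lamP a b d e f g h i p q r s * al
        + muP f g h i j k m n p q r s * ga) = 0 := by
      simp only [lamP, muP]
      linear_combination (-(h*s-i*r))*E1 + (g*s-i*q)*E3 + (-(f*r-h*p))*E2 + (f*q-g*p)*E4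
    have tzero : lamP a b d e f g h i p q r s * al
        + muP f g h i j k m n p q r s * ga = 0 := (mul_eq_zero.mp key).resolve_left hu
    by_cases hal : al = 0
    · have hga : ga ≠ 0 := fun h' => hu (by rw [hal, h']; ring)
      have hq2 : Fquad a b d e j k m n (muP f g h i j k m n p q r s)
          (-(lamP a b d e f g h i p q r s)) * ga^2 = 0 := by
        simp only [Fquad]
        linear_combination (lamP a b d e f g h i p q r s)^2 * FA
          + ((a*e-b*d)*(muP f g h i j k m n p q r s * ga
              - lamP a b d e f g h i p q r s * al)
            - (a*n+e*j-b*m-d*k)*(lamP a b d e f g h i p q r s)*ga) * tzero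
      rcases mul_eq_zero.mp hq2 with h' | h'
      · exact absurd h' hFml
      · exact hga (pow_eq_zero_iff two_ne_zero |>.mp h')
    · have hq2 : Fquad a b d e j k m n (muP f g h i j k m n p q r s)
          (-(lamP a b d e f g h i p q r s)) * al^2 = 0 := by
        simp only [Fquad]
        linear_combination (muP f g h i j k m n p q r s)^2 * FA
          + ((j*n-k*m)*(lamP a b d e f g h i p q r s * al
              - muP f g h i j k m n p q r s * ga)
            - (a*n+e*j-b*m-d*k)*(muP f g h i j k m n p q r s)*al) * tzero
      rcases mul_eq_zero.mp hq2 with h' | h'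
      · exact absurd h' hFml
      · exact hal (pow_eq_zero_iff two_ne_zero |>.mp h')
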